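/- Let F be a weakly linear k-CNF formula, and fix a sequence of partial assignments α_0 ⊆ α_1 ⊆ … where α_{i+1} extends α_i by fixing one additional variable. Let F_i be the formula obtained from F by applying α_i (removing satisfied clauses and falsified literals). Then for every variable x, the number of clauses of size exactly k−1 in F_{i} containing x or ¬x is at most 2i. -/

import Mathlib

abbrev Var := ℕ
abbrev Lit := Var × Bool
abbrev Clause := Finset Lit
abbrev CNF := Finset Clause

/-- A clause is valid if it does not contain a variable together with its negation. -/
def Clause.valid (C : Clause) : Prop := ∀ x : Var, ¬(((x, true) ∈ C) ∧ ((x, false) ∈ C))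

/-- The set of variables of a clause. -/
def vbl (C : Clause) : Finset Var := C.image Prod.fst

/-- A `k`-CNF formula: every clause is valid and has exactly `k` literals. -/
def IsKCNF (k : ℕ) (F : CNF) : Prop := ∀ C ∈ F, Clause.valid C ∧ C.card = k

/-- A CNF formula is linear if any two distinct clauses share at most one variable. -/
def LinearCNF (F : CNF) : Prop := ∀ C ∈ F, ∀ D ∈ F, C ≠ D → (vbl C ∩ vbl D).card ≤ 1

/-- A CNF formula is weakly linear if any two distinct clauses share at most one literal. -/
def WeaklyLinear (F : CNF) : Prop := ∀ C ∈ F, ∀ D ∈ F, C ≠ D → (C ∩ D).card ≤ 1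

/-- An assignment satisfies a formula if every clause contains a true literal. -/
def Satisfies (α : Var → Bool) (F : CNF) : Prop := ∀ C ∈ F, ∃ l ∈ C, α l.1 = l.2

def Unsat (F : CNF) : Prop := ¬ ∃ α, Satisfies α F

/-- Apply a partial assignment to a formula: clauses containing a true literal
are removed, and false literals are removed from the remaining clauses. -/
def applyPA (β : Var → Option Bool) (F : CNF) : CNF :=
  (F.filter (fun C => ¬ ∃ l ∈ C, β l.1 = some l.2)).image
    (fun C => C.filter (fun l => β l.1 ≠ some (!l.2)))

lemma mem_applyPA {β : Var → Option Bool} {F : CNF} {D : Clause} :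
    D ∈ applyPA β F ↔ ∃ C ∈ F, (¬ ∃ l ∈ C, β l.1 = some l.2) ∧
      C.filter (fun l => β l.1 ≠ some (!l.2)) = D := by
  simp only [applyPA, Finset.mem_image, Finset.mem_filter]
  constructor
  · rintro ⟨C, ⟨hC, hns⟩, hD⟩; exact ⟨C, hC, hns, hD⟩
  · rintro ⟨C, hC, hns, hD⟩; exact ⟨C, ⟨hC, hns⟩, hD⟩

theorem stmt12 (k : ℕ) (F : CNF) (hF : IsKCNF k F) (hw : WeaklyLinear F)
    (α : ℕ → Var → Option Bool)
    (h0 : ∀ x, α 0 x = none)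
    (hstep : ∀ i, ∃ y b, α i y = none ∧ α (i + 1) = Function.update (α i) y (some b))
    (i : ℕ) (x : Var) :
    ((applyPA (α i) F).filter (fun C => C.card = k - 1 ∧ x ∈ vbl C)).card ≤ 2 * i := by
  induction i with
  | zero =>
    simp only [Nat.mul_zero, Nat.le_zero, Finset.card_eq_zero]
    rw [Finset.filter_eq_empty_iff]
    rintro D hD ⟨hcard, hx⟩
    rw [mem_applyPA] at hD
    obtain ⟨C, hC, -, hDC⟩ := hD
    have hall : C.filter (fun l => α 0 l.1 ≠ some (!l.2)) = C := by
      apply Finset.filter_true_of_mem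
      intro l _; rw [h0]; simp
    rw [hall] at hDC
    subst hDC
    have hk := (hF C hC).2
    have : C.Nonempty := by
      simp only [vbl, Finset.mem_image] at hx
      obtain ⟨l, hl, -⟩ := hx
      exact ⟨l, hl⟩
    have := Finset.card_pos.mpr this
    omega
  | succ i ih =>
    obtain ⟨y, b, hy, hupd⟩ := hstep i
    set β := α i with hβ
    set β' := α (i + 1) with hβ'
    set P : Clause → Prop := fun C => C.card = k - 1 ∧ x ∈ vbl C with hP
    set S := (applyPA β F).filter (fun C => C.card = k - 1 ∧ x ∈ vbl C) with hS
    set S' := (applyPA β' F).filter (fun C => C.card = k - 1 ∧ x ∈ vbl C) with hS'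
    -- basic facts about the update
    have hβ'y : β' y = some b := by rw [hupd]; simp
    have hβ'ne : ∀ z, z ≠ y → β' z = β z := by
      intro z hz; rw [hupd]; simp [Function.update_of_ne hz]
    -- key structural facts about elements of S' \ S
    have key : ∀ D ∈ S' \ S, ∃ C ∈ F, ∃ c : Bool, (y, !b) ∈ C ∧ (x, c) ∈ C ∧ (x, c) ∈ D ∧
        x ≠ y ∧ C.filter (fun l => β' l.1 ≠ some (!l.2)) = D ∧ Clause.valid C := by
      intro D hD
      rw [Finset.mem_sdiff] at hD
      obtain ⟨hD', hDnS⟩ := hD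
      rw [hS', Finset.mem_filter] at hD'
      obtain ⟨hDmem, hcard, hxD⟩ := hD'
      rw [mem_applyPA] at hDmem
      obtain ⟨C, hC, hns, hfilt⟩ := hDmem
      -- x's literal in D
      simp only [vbl, Finset.mem_image] at hxD
      obtain ⟨l, hlD, hlx⟩ := hxD
      obtain ⟨c, rfl⟩ : ∃ c : Bool, l = (x, c) := ⟨l.2, by rw [← hlx]⟩
      have hlC : (x, c) ∈ C ∧ β' x ≠ some (!c) := by
        have := hlD; rw [← hfilt, Finset.mem_filter] at this; exact ⟨this.1, this.2⟩
      -- x ≠ y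
      have hxy : x ≠ y := by
        intro h; subst h
        have h1 : β' x ≠ some c := by
          intro hc; exact hns ⟨(x, c), hlC.1, hc⟩
        have h2 := hlC.2
        rw [hβ'y] at h1 h2
        cases c <;> cases b <;> simp_all
      -- C is not satisfied by β either
      have hnsβ : ¬ ∃ l ∈ C, β l.1 = some l.2 := by
        rintro ⟨l, hl, hsat⟩
        apply hns
        refine ⟨l, hl, ?_⟩
        have : l.1 ≠ y := by intro h; rw [h, hy] at hsat; cases hsat
        rw [hβ'ne l.1 this]; exact hsat
      -- (y, !b) ∈ C : otherwise D would be in S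
      have hyb : (y, !b) ∈ C := by
        by_contra hyb
        apply hDnS
        rw [hS, Finset.mem_filter]
        refine ⟨?_, hcard, ?_⟩
        · rw [mem_applyPA]
          refine ⟨C, hC, hnsβ, ?_⟩
          rw [← hfilt]
          apply Finset.filter_congr
          intro l hl
          by_cases hly : l.1 = y
          · have hl2 : l.2 = b := by
              rcases Bool.eq_or_eq_not l.2 b with h | h
              · exact h
              · exfalso; apply hyb
                have : l = (y, !b) := by
                  apply Prod.ext hly; rw [h]
                rw [← this]; exact hl
            rw [hly, hβ'y, hy, hl2]
            simp
          · rw [hβ'ne l.1 hly]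
        · simp only [vbl, Finset.mem_image]
          exact ⟨(x, c), hlD, rfl⟩
      exact ⟨C, hC, c, hyb, hlC.1, hlD, hxy, hfilt, (hF C hC).1⟩
    -- the new clauses: at most 2, via injection into Bool
    have hnew : (S' \ S).card ≤ 2 := by
      have h2 : (Finset.univ : Finset Bool).card = 2 := by simp
      rw [← h2]
      apply Finset.card_le_card_of_injOn (fun D => if (x, true) ∈ D then true else false)
        (fun _ _ => Finset.mem_univ _)
      intro D₁ hD₁ D₂ hD₂ hf
      by_contra hne
      obtain ⟨C₁, hC₁, c₁, hyb₁, hxC₁, hxD₁, hxy₁, hfilt₁, hval₁⟩ := key D₁ hD₁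
      obtain ⟨C₂, hC₂, c₂, hyb₂, hxC₂, hxD₂, hxy₂, hfilt₂, hval₂⟩ := key D₂ hD₂
      -- the chosen booleans agree with the if-function
      have hfc : ∀ (D : Clause) (C : Clause) (c : Bool), Clause.valid C → (x, c) ∈ D →
          C.filter (fun l => β' l.1 ≠ some (!l.2)) = D →
          (if (x, true) ∈ D then true else false) = c := by
        intro D C c hval hcD hfilt
        by_cases ht : (x, true) ∈ D
        · rw [if_pos ht]
          cases c
          · exfalso
            apply hval x
            constructor
            · rw [← hfilt] at ht; exact (Finset.mem_filter.mp ht).1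
            · rw [← hfilt] at hcD; exact (Finset.mem_filter.mp hcD).1
          · rfl
        · rw [if_neg ht]
          cases c
          · rfl
          · exact absurd hcD ht
      have e₁ := hfc D₁ C₁ c₁ hval₁ hxD₁ hfilt₁
      have e₂ := hfc D₂ C₂ c₂ hval₂ hxD₂ hfilt₂
      have hcc : c₁ = c₂ := by rw [← e₁, ← e₂]; simpa using hf
      subst hcc
      have hCne : C₁ ≠ C₂ := by
        intro h; apply hne; rw [← hfilt₁, ← hfilt₂, h]
      have hsub : ({(y, !b), (x, c₁)} : Finset Lit) ⊆ C₁ ∩ C₂ := by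
        intro l hl
        simp only [Finset.mem_insert, Finset.mem_singleton] at hl
        rcases hl with h | h <;> subst h <;>
          simp [Finset.mem_inter, hyb₁, hyb₂, hxC₁, hxC₂]
      have hcard2 : ({(y, !b), (x, c₁)} : Finset Lit).card = 2 := by
        rw [Finset.card_insert_of_notMem, Finset.card_singleton]
        simp only [Finset.mem_singleton]
        intro h
        exact hxy₁ (congrArg Prod.fst h).symm
      have := Finset.card_le_card hsub
      have := hw C₁ hC₁ C₂ hC₂ hCne
      omega
    -- conclude
    calc S'.card ≤ (S' \ S).card + S.card := Finset.card_le_card_sdiff_add_card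
      _ ≤ 2 + 2 * i := Nat.add_le_add hnew ih
      _ = 2 * (i + 1) := by ring
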